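/- arXiv:2604.05398 — 3 statements merged into one kernel-verified Lean document; each statement's English description precedes it below -/
import Mathlib

section
/- Consider the time-inhomogeneous linear–quadratic problem with continuous coefficients B : [0,∞) → ℝ^{d×m}, Σ : [0,∞) → ℝ^{d×d}, α_i : [0,∞) → ℝ and λ_i : [0,∞) → [0,∞) for i = 1,…,d, with R(t) an m × m symmetric positive definite matrix and Q(t) a d × d symmetric matrix for each t, discount rate β > 0, entropy weight γ > 0, running reward f(t, x, u) = −(uᵀR(t)u + xᵀQ(t)x), and generator (𝓛^u φ)(t, x) = (B(t)u)·∇_x φ(t, x) + (1/2) Tr(Σ(t)Σ(t)ᵀ ∇²_x φ(t, x)) + Σ_{i=1}^d λ_i(t)[φ(t, x + α_i(t)e_i) − φ(t, x) − α_i(t) ∂_{x_i} φ(t, x)]. Suppose H : [0,∞) → ℝ^{d×d} is differentiable with H(t) symmetric and H'(t) = β H(t) + Q(t) − H(t)B(t)R(t)⁻¹B(t)ᵀH(t), and g : [0,∞) → ℝ is differentiable with g'(t) = β g(t) − Tr(Σ(t)Σ(t)ᵀH(t)) − Σ_{i=1}^d λ_i(t) α_i(t)² H_{ii}(t) − c_γ(t),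 where c_γ(t) := (γ/2)(m log(πγ) − log det R(t)). Then V(t, x) := xᵀH(t)x + g(t) satisfies, for every t ≥ 0 and x ∈ ℝ^d, that the function u ↦ exp(((𝓛^u V)(t,x) + f(t,x,u))/γ) is integrable on ℝ^m and 0 = ∂_t V(t, x) + γ log ∫_{ℝ^m} exp( ((𝓛^u V)(t, x) + f(t, x, u))/γ ) du − β V(t, x). -/
open Matrix MeasureTheory

/-- Gradient of a function on `ℝ^d` (coordinatewise, via the Fréchet derivative). -/
noncomputable def gradientVec {d : ℕ} (φ : (Fin d → ℝ) → ℝ) (x : Fin d → ℝ) : Fin d → ℝ :=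
  fun i => fderiv ℝ φ x (Pi.single i 1)

/-- Hessian matrix of a function on `ℝ^d`. -/
noncomputable def hessianMat {d : ℕ} (φ : (Fin d → ℝ) → ℝ) (x : Fin d → ℝ) :
    Matrix (Fin d) (Fin d) ℝ :=
  fun i j => fderiv ℝ (fun y => fderiv ℝ φ y (Pi.single i 1)) x (Pi.single j 1)

/-- The controlled generator of the linear–quadratic jump-diffusion. -/
noncomputable def lqGen {d m : ℕ} (B : Matrix (Fin d) (Fin m) ℝ)
    (S : Matrix (Fin d) (Fin d) ℝ) (α lam : Fin d → ℝ)
    (u : Fin m → ℝ) (φ : (Fin d → ℝ) → ℝ) (x : Fin d → ℝ) : ℝ :=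
  B.mulVec u ⬝ᵥ gradientVec φ x
    + (1 / 2) * Matrix.trace (S * Sᵀ * hessianMat φ x)
    + ∑ i, lam i *
        (φ (x + α i • (Pi.single i 1 : Fin d → ℝ)) - φ x - α i * gradientVec φ x i)

set_option maxHeartbeats 1000000

lemma quad_as_sum {d : ℕ} (H : Matrix (Fin d) (Fin d) ℝ) (y : Fin d → ℝ) :
    y ⬝ᵥ H.mulVec y = ∑ i, ∑ j, H i j * (y i * y j) := by
  simp only [dotProduct, mulVec, Finset.mul_sum]
  exact Finset.sum_congr rfl fun i _ => Finset.sum_congr rfl fun j _ => by ring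

lemma hasFDerivAt_quadForm {d : ℕ} (H : Matrix (Fin d) (Fin d) ℝ) (x : Fin d → ℝ) (c : ℝ) :
    HasFDerivAt (fun y : Fin d → ℝ => y ⬝ᵥ H.mulVec y + c)
      (∑ i, ∑ j, H i j • ((x i • (ContinuousLinearMap.proj j : (Fin d → ℝ) →L[ℝ] ℝ))
        + x j • (ContinuousLinearMap.proj i : (Fin d → ℝ) →L[ℝ] ℝ))) x := by
  have h : ∀ i j : Fin d, HasFDerivAt (fun y : Fin d → ℝ => H i j * (y i * y j))
      (H i j • ((x i • (ContinuousLinearMap.proj j : (Fin d → ℝ) →L[ℝ] ℝ))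
        + x j • (ContinuousLinearMap.proj i : (Fin d → ℝ) →L[ℝ] ℝ))) x := by
    intro i j
    have hmul : HasFDerivAt (fun y : Fin d → ℝ => y i * y j)
        (x i • (ContinuousLinearMap.proj j : (Fin d → ℝ) →L[ℝ] ℝ)
          + x j • (ContinuousLinearMap.proj i : (Fin d → ℝ) →L[ℝ] ℝ)) x :=
      (hasFDerivAt_apply i x).mul (hasFDerivAt_apply j x)
    exact hmul.const_mul _
  have hsum := (HasFDerivAt.fun_sum (fun i (_ : i ∈ Finset.univ) =>
      HasFDerivAt.fun_sum (fun j (_ : j ∈ Finset.univ) => h i j))).add_const c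
  have heq : (fun y : Fin d → ℝ => y ⬝ᵥ H.mulVec y + c)
      = fun y => (∑ i, ∑ j, H i j * (y i * y j)) + c :=
    funext fun y => by rw [quad_as_sum]
  rw [heq]
  exact hsum

lemma gradientVec_quad {d : ℕ} (H : Matrix (Fin d) (Fin d) ℝ) (x : Fin d → ℝ) (c : ℝ) :
    gradientVec (fun y => y ⬝ᵥ H.mulVec y + c) x
      = fun k => Hᵀ.mulVec x k + H.mulVec x k := by
  funext k
  rw [gradientVec, (hasFDerivAt_quadForm H x c).fderiv]
  simp only [ContinuousLinearMap.coe_sum', Finset.sum_apply, ContinuousLinearMap.coe_smul',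
    Pi.smul_apply, ContinuousLinearMap.add_apply, ContinuousLinearMap.proj_apply,
    Pi.single_apply, smul_eq_mul]
  rw [mulVec, mulVec, dotProduct, dotProduct]
  simp only [transpose_apply]
  simp only [mul_add, Finset.sum_add_distrib, mul_ite, mul_one, mul_zero,
    Finset.sum_ite_eq', Finset.mem_univ, if_true]
  congr 1
  have h1 : ∀ i : Fin d, (∑ j, if i = k then H i j * x j else 0)
      = if i = k then ∑ j, H k j * x j else 0 := by
    intro i
    by_cases h : i = k
    · subst h; simp
    · simp [h]
  simp only [h1, Finset.sum_ite_eq', Finset.mem_univ, if_true]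

lemma hasFDerivAt_mulVec_apply {d : ℕ} (M : Matrix (Fin d) (Fin d) ℝ) (i : Fin d)
    (y : Fin d → ℝ) : HasFDerivAt (fun z : Fin d → ℝ => M.mulVec z i)
      (∑ a, M i a • (ContinuousLinearMap.proj a : (Fin d → ℝ) →L[ℝ] ℝ)) y := by
  have heq : (fun z : Fin d → ℝ => M.mulVec z i) = fun z => ∑ a, M i a * z a := by
    funext z; simp [mulVec, dotProduct]
  rw [heq]
  exact HasFDerivAt.fun_sum fun a _ => (hasFDerivAt_apply a y).const_mul (M i a)

lemma hessianMat_quad {d : ℕ} (H : Matrix (Fin d) (Fin d) ℝ) (x : Fin d → ℝ) (c : ℝ) :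
    hessianMat (fun y => y ⬝ᵥ H.mulVec y + c) x = Hᵀ + H := by
  funext i j
  have hg : (fun y : Fin d → ℝ => fderiv ℝ (fun z => z ⬝ᵥ H.mulVec z + c) y (Pi.single i 1))
      = fun y => Hᵀ.mulVec y i + H.mulVec y i := by
    funext y
    have := congrFun (gradientVec_quad H y c) i
    simpa [gradientVec] using this
  have hd : HasFDerivAt (fun y : Fin d → ℝ => Hᵀ.mulVec y i + H.mulVec y i)
      ((∑ a, Hᵀ i a • (ContinuousLinearMap.proj a : (Fin d → ℝ) →L[ℝ] ℝ))
        + ∑ a, H i a • (ContinuousLinearMap.proj a : (Fin d → ℝ) →L[ℝ] ℝ)) x :=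
    (hasFDerivAt_mulVec_apply Hᵀ i x).add (hasFDerivAt_mulVec_apply H i x)
  rw [hessianMat]
  rw [hg, hd.fderiv]
  simp only [ContinuousLinearMap.add_apply, ContinuousLinearMap.coe_sum', Finset.sum_apply,
    ContinuousLinearMap.coe_smul', Pi.smul_apply, ContinuousLinearMap.proj_apply,
    Pi.single_apply, smul_eq_mul, mul_ite, mul_one, mul_zero, Finset.sum_ite_eq',
    Finset.mem_univ, if_true]
  simp [Matrix.add_apply, transpose_apply]

open Real in
lemma gauss_basic {m : ℕ} {γ : ℝ} (hγ : 0 < γ) :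
    Integrable (fun w : Fin m → ℝ => Real.exp (-(∑ i, (w i)^2) / γ)) volume ∧
    ∫ w : Fin m → ℝ, Real.exp (-(∑ i, (w i)^2) / γ) = (Real.sqrt (π * γ)) ^ m := by
  have h1γ : 0 < 1/γ := by positivity
  have heq : (fun w : Fin m → ℝ => Real.exp (-(∑ i, (w i)^2) / γ))
      = fun w => ∏ i, Real.exp (-(1/γ) * (w i)^2) := by
    funext w
    rw [← Real.exp_sum]
    congr 1
    rw [neg_div, Finset.sum_div, ← Finset.sum_neg_distrib]
    exact Finset.sum_congr rfl fun i _ => by ring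
  constructor
  · rw [heq]
    exact Integrable.fintype_prod (f := fun (_ : Fin m) (x : ℝ) => Real.exp (-(1/γ) * x^2))
      (fun _ => integrable_exp_neg_mul_sq h1γ)
  · rw [heq, MeasureTheory.volume_pi, MeasureTheory.integral_fintype_prod_eq_pow (ι := Fin m)
      (f := fun x : ℝ => Real.exp (-(1/γ) * x^2)), integral_gaussian, Fintype.card_fin]
    congr 2
    field_simp

lemma psd_det_nonneg {n : ℕ} {A : Matrix (Fin n) (Fin n) ℝ} (hA : A.PosSemidef) :
    0 ≤ A.det := by
  rw [hA.isHermitian.det_eq_prod_eigenvalues]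
  exact Finset.prod_nonneg fun i _ => by exact_mod_cast hA.eigenvalues_nonneg i

open scoped MatrixOrder Matrix.Norms.L2Operator in
open Real in
lemma gauss_posdef {m : ℕ} {M : Matrix (Fin m) (Fin m) ℝ} (hM : M.PosDef) {γ : ℝ}
    (hγ : 0 < γ) :
    Integrable (fun v : Fin m → ℝ => Real.exp (-(v ⬝ᵥ M.mulVec v) / γ)) volume ∧
    ∫ v : Fin m → ℝ, Real.exp (-(v ⬝ᵥ M.mulVec v) / γ)
      = Real.sqrt (π * γ) ^ m / Real.sqrt M.det := by
  classical
  set A := CFC.sqrt M with hAdef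
  have hAA : A * A = M := CFC.sqrt_mul_sqrt_self M hM.posSemidef.nonneg
  have hAsymm : Aᵀ = A := by
    have := (CFC.sqrt_nonneg M).posSemidef.isHermitian
    simpa [Matrix.IsHermitian, Matrix.conjTranspose_eq_transpose_of_trivial] using this
  have hdet : 0 < M.det := hM.det_pos
  have hdetAA : A.det * A.det = M.det := by rw [← Matrix.det_mul, hAA]
  have hAnn : 0 ≤ A.det := psd_det_nonneg (CFC.sqrt_nonneg M).posSemidef
  have hsqrt : Real.sqrt M.det = A.det := by rw [← hdetAA]; exact Real.sqrt_mul_self hAnn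
  have hAdet_pos : 0 < A.det := by
    rw [← hsqrt]; exact Real.sqrt_pos.mpr hdet
  have hAdet_ne : A.det ≠ 0 := hAdet_pos.ne'
  -- pointwise identity
  have hpt : ∀ v : Fin m → ℝ, v ⬝ᵥ M.mulVec v = ∑ i, (A.mulVec v i)^2 := by
    intro v
    rw [← hAA, ← Matrix.mulVec_mulVec, Matrix.dotProduct_mulVec]
    have hvm : v ᵥ* A = A.mulVec v := by
      conv_lhs => rw [← hAsymm]
      rw [Matrix.vecMul_transpose]
    rw [hvm, dotProduct]
    exact Finset.sum_congr rfl fun i _ => (sq (A.mulVec v i)).symm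
  set f : (Fin m → ℝ) → ℝ := fun w => Real.exp (-(∑ i, (w i)^2) / γ) with hfdef
  obtain ⟨hfint, hfval⟩ := gauss_basic (m := m) hγ
  have hcont : Continuous f := by
    apply Real.continuous_exp.comp
    exact (continuous_finset_sum _ fun i _ => (continuous_apply i).pow 2).neg.div_const γ
  set L := Matrix.toLin' A with hLdef
  have hLcont : Continuous L := LinearMap.continuous_on_pi L
  have hmap : Measure.map L volume = ENNReal.ofReal |A.det⁻¹| • volume :=
    Real.map_matrix_volume_pi_eq_smul_volume_pi hAdet_ne
  have hLae : AEMeasurable L volume := hLcont.measurable.aemeasurable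
  have hfm : AEStronglyMeasurable f (Measure.map L volume) := hcont.aestronglyMeasurable
  have hcomp : Integrable (fun v => f (L v)) volume :=
    (integrable_map_measure hfm hLae).mp
      (by rw [hmap]; exact hfint.smul_measure ENNReal.ofReal_ne_top)
  have htarget : (fun v : Fin m → ℝ => Real.exp (-(v ⬝ᵥ M.mulVec v) / γ))
      = fun v => f (L v) := by
    funext v
    rw [hfdef]
    simp only [hLdef, Matrix.toLin'_apply]
    rw [hpt v]
  constructor
  · rw [htarget]; exact hcomp
  · rw [htarget]
    have : ∫ v, f (L v) = ∫ w, f w ∂(Measure.map L volume) :=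
      (integral_map hLae hfm).symm
    rw [this, hmap, integral_smul_measure, hfval,
      ENNReal.toReal_ofReal (abs_nonneg _), abs_of_pos (inv_pos.mpr hAdet_pos), hsqrt]
    rw [smul_eq_mul, inv_mul_eq_div]

open Real in
lemma gauss_full {m : ℕ} {M : Matrix (Fin m) (Fin m) ℝ} (hM : M.PosDef) {γ : ℝ}
    (hγ : 0 < γ) (b : Fin m → ℝ) (C : ℝ) :
    Integrable (fun u : Fin m → ℝ =>
        Real.exp ((-(u ⬝ᵥ M.mulVec u) + 2 * (u ⬝ᵥ b) + C) / γ)) volume ∧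
    ∫ u : Fin m → ℝ, Real.exp ((-(u ⬝ᵥ M.mulVec u) + 2 * (u ⬝ᵥ b) + C) / γ)
      = Real.exp ((C + b ⬝ᵥ M⁻¹.mulVec b) / γ)
          * (Real.sqrt (π * γ) ^ m / Real.sqrt M.det) := by
  classical
  have hMsymm : Mᵀ = M := by
    have := hM.isHermitian
    simpa [Matrix.IsHermitian, Matrix.conjTranspose_eq_transpose_of_trivial] using this
  have hMunit : IsUnit M.det := hM.det_pos.ne'.isUnit
  set μ := M⁻¹.mulVec b with hμdef
  have hMμ : M.mulVec μ = b := by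
    rw [hμdef, Matrix.mulVec_mulVec, Matrix.mul_nonsing_inv M hMunit, Matrix.one_mulVec]
  have hpt : ∀ u : Fin m → ℝ,
      -(u ⬝ᵥ M.mulVec u) + 2 * (u ⬝ᵥ b) + C
        = -((u - μ) ⬝ᵥ M.mulVec (u - μ)) + (b ⬝ᵥ μ + C) := by
    intro u
    have hμMu : μ ⬝ᵥ M.mulVec u = u ⬝ᵥ b := by
      rw [Matrix.dotProduct_mulVec]
      have : μ ᵥ* M = b := by
        conv_lhs => rw [← hMsymm]
        rw [Matrix.vecMul_transpose, hMμ]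
      rw [this, dotProduct_comm]
    have hexp : (u - μ) ⬝ᵥ M.mulVec (u - μ)
        = u ⬝ᵥ M.mulVec u - u ⬝ᵥ b - (u ⬝ᵥ b - b ⬝ᵥ μ) := by
      rw [Matrix.mulVec_sub, sub_dotProduct, dotProduct_sub,
        dotProduct_sub, hMμ, hμMu, dotProduct_comm μ b]
    rw [hexp]; ring
  obtain ⟨hint0, hval0⟩ := gauss_posdef hM hγ
  have hshift_int : Integrable
      (fun u : Fin m → ℝ => Real.exp (-((u - μ) ⬝ᵥ M.mulVec (u - μ)) / γ)) volume :=
    hint0.comp_sub_right μ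
  have heq : (fun u : Fin m → ℝ =>
      Real.exp ((-(u ⬝ᵥ M.mulVec u) + 2 * (u ⬝ᵥ b) + C) / γ))
      = fun u => Real.exp ((b ⬝ᵥ μ + C) / γ)
          * Real.exp (-((u - μ) ⬝ᵥ M.mulVec (u - μ)) / γ) := by
    funext u
    rw [hpt u, add_div, Real.exp_add, mul_comm]
  constructor
  · rw [heq]
    exact hshift_int.const_mul _
  · rw [heq, MeasureTheory.integral_const_mul]
    have : ∫ u : Fin m → ℝ, Real.exp (-((u - μ) ⬝ᵥ M.mulVec (u - μ)) / γ)
        = ∫ v : Fin m → ℝ, Real.exp (-(v ⬝ᵥ M.mulVec v) / γ) :=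
      integral_sub_right_eq_self (fun v : Fin m → ℝ => Real.exp (-(v ⬝ᵥ M.mulVec v) / γ)) μ
    rw [this, hval0]
    congr 2
    rw [dotProduct_comm]
    ring

lemma dot_double {d : ℕ} (v w : Fin d → ℝ) :
    v ⬝ᵥ (fun k => w k + w k) = 2 * (v ⬝ᵥ w) := by
  simp [dotProduct, mul_add, Finset.sum_add_distrib, two_mul]

lemma vecMul_eq_transpose_mulVec {d m : ℕ} (w : Fin d → ℝ) (B : Matrix (Fin d) (Fin m) ℝ) :
    w ᵥ* B = Bᵀ.mulVec w := by
  conv_lhs => rw [← Matrix.transpose_transpose B]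
  rw [Matrix.vecMul_transpose]

lemma mulVec_dot {d m : ℕ} (B : Matrix (Fin d) (Fin m) ℝ) (u : Fin m → ℝ) (w : Fin d → ℝ) :
    (B.mulVec u) ⬝ᵥ w = u ⬝ᵥ (Bᵀ.mulVec w) := by
  rw [dotProduct_comm, Matrix.dotProduct_mulVec, vecMul_eq_transpose_mulVec,
    dotProduct_comm]

lemma jump_term {d : ℕ} (Hm : Matrix (Fin d) (Fin d) ℝ) (x : Fin d → ℝ) (c gg : ℝ)
    (i : Fin d) :
    ((x + c • (Pi.single i 1 : Fin d → ℝ)) ⬝ᵥ Hm.mulVec (x + c • (Pi.single i 1 : Fin d → ℝ)) + gg)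
        - (x ⬝ᵥ Hm.mulVec x + gg)
        - c * (Hmᵀ.mulVec x i + Hm.mulVec x i) = c^2 * Hm i i := by
  have h1 : x ⬝ᵥ Hm.mulVec (Pi.single i 1) = Hmᵀ.mulVec x i := by
    rw [Matrix.mulVec_single_one]
    simp only [mul_one, dotProduct, mulVec, transpose_apply]
    exact Finset.sum_congr rfl fun a _ => mul_comm _ _
  have h2 : (Pi.single i 1 : Fin d → ℝ) ⬝ᵥ Hm.mulVec x = Hm.mulVec x i := by
    simp [single_dotProduct]
  have h3 : (Pi.single i 1 : Fin d → ℝ) ⬝ᵥ Hm.mulVec (Pi.single i 1) = Hm i i := by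
    rw [Matrix.mulVec_single_one]
    simp [single_dotProduct]
  rw [Matrix.mulVec_add, Matrix.mulVec_smul, dotProduct_add, add_dotProduct,
    add_dotProduct, dotProduct_smul, dotProduct_smul,
    smul_dotProduct, smul_dotProduct, h1, h2, h3]
  simp only [smul_eq_mul]
  ring

lemma lqGen_quad {d m : ℕ} (B : Matrix (Fin d) (Fin m) ℝ) (S : Matrix (Fin d) (Fin d) ℝ)
    (α lam : Fin d → ℝ) (Hm : Matrix (Fin d) (Fin d) ℝ) (hsym : Hmᵀ = Hm) (gg : ℝ)
    (u : Fin m → ℝ) (x : Fin d → ℝ) :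
    lqGen B S α lam u (fun y => y ⬝ᵥ Hm.mulVec y + gg) x
      = 2 * (u ⬝ᵥ (Bᵀ.mulVec (Hm.mulVec x)))
        + Matrix.trace (S * Sᵀ * Hm)
        + ∑ i, lam i * (α i)^2 * Hm i i := by
  rw [lqGen, gradientVec_quad, hessianMat_quad]
  have hgrad : (B.mulVec u) ⬝ᵥ (fun k => Hmᵀ.mulVec x k + Hm.mulVec x k)
      = 2 * (u ⬝ᵥ (Bᵀ.mulVec (Hm.mulVec x))) := by
    rw [hsym, dot_double, mulVec_dot]
  have htr : (1/2 : ℝ) * Matrix.trace (S * Sᵀ * (Hmᵀ + Hm)) = Matrix.trace (S * Sᵀ * Hm) := by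
    rw [hsym, mul_add, Matrix.trace_add]
    ring
  have hjump : ∀ i, lam i * (((x + α i • (Pi.single i 1 : Fin d → ℝ)) ⬝ᵥ Hm.mulVec (x + α i • (Pi.single i 1 : Fin d → ℝ)) + gg)
      - (x ⬝ᵥ Hm.mulVec x + gg) - α i * (Hmᵀ.mulVec x i + Hm.mulVec x i))
      = lam i * (α i)^2 * Hm i i := by
    intro i
    rw [jump_term, mul_assoc]
  rw [hgrad, htr]
  congr 1
  exact Finset.sum_congr rfl fun i _ => hjump i

/-- Verification of the quadratic ansatz for the entropy-regularized infinite-horizon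
HJB equation of the time-inhomogeneous LQ jump-diffusion problem, in log-partition
(Gibbs) form: if `H` solves the Riccati ODE and `g` the scalar ODE with the entropy
correction `c_γ(t) = (γ/2)(m log(πγ) − log det R(t))`, then `V(t,x) = xᵀH(t)x + g(t)`
satisfies `0 = ∂ₜV + γ log ∫ exp((𝓛^u V + f)/γ) du − βV`. -/
theorem lq_entropy_hjb_verification
    (d m : ℕ)
    (B : ℝ → Matrix (Fin d) (Fin m) ℝ) (S : ℝ → Matrix (Fin d) (Fin d) ℝ)
    (α lam : Fin d → ℝ → ℝ)
    (R : ℝ → Matrix (Fin m) (Fin m) ℝ) (Q : ℝ → Matrix (Fin d) (Fin d) ℝ)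
    (β γ : ℝ) (hβ : 0 < β) (hγ : 0 < γ)
    (hBc : ContinuousOn B (Set.Ici 0)) (hSc : ContinuousOn S (Set.Ici 0))
    (hαc : ∀ i, ContinuousOn (α i) (Set.Ici 0))
    (hlamc : ∀ i, ContinuousOn (lam i) (Set.Ici 0))
    (hRc : ContinuousOn R (Set.Ici 0)) (hQc : ContinuousOn Q (Set.Ici 0))
    (hlam : ∀ i t, 0 ≤ t → 0 ≤ lam i t)
    (hRpos : ∀ t, 0 ≤ t → (R t).PosDef)
    (hQsymm : ∀ t, 0 ≤ t → (Q t).IsSymm)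
    (H : ℝ → Matrix (Fin d) (Fin d) ℝ) (g : ℝ → ℝ)
    (hHsymm : ∀ t, 0 ≤ t → (H t).IsSymm)
    (hH : ∀ t, 0 ≤ t → ∀ i j, HasDerivAt (fun s => H s i j)
        ((β • H t + Q t - H t * B t * (R t)⁻¹ * (B t)ᵀ * H t) i j) t)
    (hg : ∀ t, 0 ≤ t → HasDerivAt g
        (β * g t - Matrix.trace (S t * (S t)ᵀ * H t)
          - ∑ i, lam i t * (α i t) ^ 2 * H t i i
          - (γ / 2) * (m * Real.log (Real.pi * γ) - Real.log (R t).det)) t)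
    (V : ℝ → (Fin d → ℝ) → ℝ)
    (hV : V = fun t x => x ⬝ᵥ (H t).mulVec x + g t) :
    ∀ t, 0 ≤ t → ∀ x : Fin d → ℝ,
      Integrable (fun u : Fin m → ℝ =>
          Real.exp ((lqGen (B t) (S t) (fun i => α i t) (fun i => lam i t) u (V t) x
              - (u ⬝ᵥ (R t).mulVec u + x ⬝ᵥ (Q t).mulVec x)) / γ)) volume ∧
      0 = deriv (fun s => V s x) t
          + γ * Real.log (∫ u : Fin m → ℝ,
              Real.exp ((lqGen (B t) (S t) (fun i => α i t) (fun i => lam i t) u (V t) x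
                  - (u ⬝ᵥ (R t).mulVec u + x ⬝ᵥ (Q t).mulVec x)) / γ))
          - β * V t x := by
  intro t ht x
  have hVt : V t = fun y => y ⬝ᵥ (H t).mulVec y + g t := by rw [hV]
  have hHsym : (H t)ᵀ = H t := hHsymm t ht
  have hRpd := hRpos t ht
  set b : Fin m → ℝ := (B t)ᵀ.mulVec ((H t).mulVec x) with hbdef
  set C : ℝ := Matrix.trace (S t * (S t)ᵀ * H t)
      + (∑ i, lam i t * (α i t)^2 * H t i i) - x ⬝ᵥ (Q t).mulVec x with hCdef
  have hfun : (fun u : Fin m → ℝ =>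
      Real.exp ((lqGen (B t) (S t) (fun i => α i t) (fun i => lam i t) u (V t) x
          - (u ⬝ᵥ (R t).mulVec u + x ⬝ᵥ (Q t).mulVec x)) / γ))
      = fun u => Real.exp ((-(u ⬝ᵥ (R t).mulVec u) + 2 * (u ⬝ᵥ b) + C) / γ) := by
    funext u
    rw [hVt, lqGen_quad _ _ _ _ _ hHsym]
    congr 1
    rw [hCdef, hbdef]
    ring
  obtain ⟨hint, hval⟩ := gauss_full hRpd hγ b C
  refine ⟨by rw [hfun]; exact hint, ?_⟩
  -- time derivative
  set Mt : Matrix (Fin d) (Fin d) ℝ :=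
      β • H t + Q t - H t * B t * (R t)⁻¹ * (B t)ᵀ * H t with hMtdef
  have hqd : HasDerivAt (fun s => x ⬝ᵥ (H s).mulVec x) (x ⬝ᵥ Mt.mulVec x) t := by
    have hfun2 : (fun s => x ⬝ᵥ (H s).mulVec x)
        = fun s => ∑ i, ∑ j, H s i j * (x i * x j) := funext fun s => quad_as_sum (H s) x
    rw [hfun2, quad_as_sum Mt x]
    exact HasDerivAt.fun_sum fun i _ => HasDerivAt.fun_sum fun j _ => (hH t ht i j).mul_const _
  have hVd : HasDerivAt (fun s => V s x)
      (x ⬝ᵥ Mt.mulVec x + (β * g t - Matrix.trace (S t * (S t)ᵀ * H t)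
          - ∑ i, lam i t * (α i t) ^ 2 * H t i i
          - (γ / 2) * (m * Real.log (Real.pi * γ) - Real.log (R t).det))) t := by
    have : (fun s => V s x) = fun s => x ⬝ᵥ (H s).mulVec x + g s := by rw [hV]
    rw [this]
    exact hqd.add (hg t ht)
  rw [hfun, hval, hVd.deriv]
  -- log computation
  have hπγ : (0:ℝ) < Real.pi * γ := by positivity
  have hdetpos : 0 < (R t).det := hRpd.det_pos
  rw [Real.log_mul (Real.exp_ne_zero _) (by positivity), Real.log_exp,
    Real.log_div (by positivity) (by positivity), Real.log_pow,
    Real.log_sqrt hπγ.le, Real.log_sqrt hdetpos.le]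
  -- the Riccati quadratic term
  have hK : x ⬝ᵥ (H t * B t * (R t)⁻¹ * (B t)ᵀ * H t).mulVec x
      = b ⬝ᵥ ((R t)⁻¹).mulVec b := by
    simp only [← Matrix.mulVec_mulVec]
    rw [Matrix.dotProduct_mulVec x (H t), vecMul_eq_transpose_mulVec, hHsym,
      Matrix.dotProduct_mulVec _ (B t), vecMul_eq_transpose_mulVec, ← hbdef]
  have hMtx : x ⬝ᵥ Mt.mulVec x
      = β * (x ⬝ᵥ (H t).mulVec x) + x ⬝ᵥ (Q t).mulVec x - b ⬝ᵥ ((R t)⁻¹).mulVec b := by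
    rw [hMtdef, Matrix.sub_mulVec, Matrix.add_mulVec, dotProduct_sub,
      dotProduct_add, Matrix.smul_mulVec, dotProduct_smul,
      smul_eq_mul, hK]
  rw [hMtx, hVt]
  rw [mul_add, mul_div_cancel₀ _ (ne_of_gt hγ)]
  rw [hCdef]
  ring
end

section
/- Consider the time-homogeneous linear–quadratic problem with constant matrices B ∈ ℝ^{d×m}, Σ ∈ ℝ^{d×d}, jump sizes α_i ∈ ℝ and intensities λ_i ≥ 0 (i = 1,…,d), R an m × m symmetric positive definite matrix, Q a d × d symmetric matrix, discount rate β > 0, entropy weight γ > 0, running reward f(x, u) = −(uᵀRu + xᵀQx), and generator (𝓛^u φ)(x) = (Bu)·∇φ(x) + (1/2) Tr(ΣΣᵀ ∇²φ(x)) + Σ_{i=1}^d λ_i[φ(x + α_i e_i) − φ(x) − α_i ∂_{x_i} φ(x)]. Suppose H is a d × d symmetric matrix solving the algebraic Riccati equation 0 = β H + Q − H B R⁻¹ Bᵀ H, and set g := β⁻¹ [ Tr(ΣΣᵀH) + Σ_{i=1}^d λ_i α_i² H_{ii} + (γ/2)(m log(πγ) − log det R) ]. Then V(x) := xᵀHx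 + g satisfies, for every x ∈ ℝ^d, β V(x) = γ log ∫_{ℝ^m} exp( ((𝓛^u V)(x) + f(x, u))/γ ) du. -/
open Matrix MeasureTheory

section Aux

lemma dot_mulVec_left {d m : ℕ} (A : Matrix (Fin d) (Fin m) ℝ) (v : Fin m → ℝ) (w : Fin d → ℝ) :
    (A.mulVec v) ⬝ᵥ w = v ⬝ᵥ (Aᵀ.mulVec w) := by
  rw [Matrix.mulVec_transpose, dotProduct_comm v, dotProduct_comm,
    Matrix.dotProduct_mulVec]

lemma gauss1 (γ : ℝ) (hγ : 0 < γ) :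
    ∫ x : ℝ, Real.exp (-x^2/γ) = Real.sqrt (Real.pi * γ) := by
  have h := integral_gaussian γ⁻¹
  rw [div_inv_eq_mul] at h
  rw [show (fun x : ℝ => Real.exp (-x^2/γ)) = fun x => Real.exp (-γ⁻¹ * x^2) from
    funext fun x => by ring_nf, h]

lemma gaussm (m : ℕ) (γ : ℝ) (hγ : 0 < γ) :
    ∫ v : Fin m → ℝ, Real.exp (-(v ⬝ᵥ v)/γ) = Real.sqrt (Real.pi * γ) ^ m := by
  rw [show (fun v : Fin m → ℝ => Real.exp (-(v ⬝ᵥ v)/γ))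
      = fun v => ∏ i, Real.exp (-(v i)^2/γ) from ?_]
  · rw [MeasureTheory.volume_pi, integral_fintype_prod_eq_pow (ι := Fin m) (fun x : ℝ => Real.exp (-x^2/γ)), gauss1 γ hγ,
      Fintype.card_fin]
  · funext v
    rw [← Real.exp_sum]
    congr 1
    simp [dotProduct, Finset.sum_div, pow_two, neg_div]

lemma cov {m : ℕ} (M : Matrix (Fin m) (Fin m) ℝ) (hM : M.det ≠ 0)
    (f : (Fin m → ℝ) → ℝ) (hf : Continuous f) :
    ∫ v : Fin m → ℝ, f (M.mulVec v) = |M.det|⁻¹ * ∫ u : Fin m → ℝ, f u := by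
  have hmap := Real.map_matrix_volume_pi_eq_smul_volume_pi hM
  have hφ : AEMeasurable (Matrix.toLin' M) (volume : Measure (Fin m → ℝ)) :=
    (LinearMap.continuous_of_finiteDimensional _).measurable.aemeasurable
  have hfm : AEStronglyMeasurable f (Measure.map (Matrix.toLin' M) volume) := by
    rw [hmap]
    exact hf.aestronglyMeasurable.smul_measure _
  rw [show (fun v : Fin m → ℝ => f (M.mulVec v)) = fun v => f (Matrix.toLin' M v) from
    funext fun v => by rw [Matrix.toLin'_apply]]
  rw [← integral_map hφ hfm, hmap, integral_smul_measure]
  simp [ENNReal.toReal_ofReal (by positivity : (0:ℝ) ≤ |M.det|⁻¹)]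

lemma sqrt_pow' (x : ℝ) (n : ℕ) (h : 0 ≤ x) : Real.sqrt (x^n) = Real.sqrt x ^ n := by
  rw [← Real.sqrt_sq (by positivity : (0:ℝ) ≤ Real.sqrt x ^ n)]
  congr 1
  rw [← pow_mul, mul_comm, pow_mul, Real.sq_sqrt h]

lemma psd_det_nonneg_s9 {m : ℕ} (R : Matrix (Fin m) (Fin m) ℝ) (hR : R.PosSemidef) : 0 ≤ R.det := by
  rw [hR.isHermitian.det_eq_prod_eigenvalues]
  exact Finset.prod_nonneg fun i _ => hR.eigenvalues_nonneg i

lemma cont_quad {m : ℕ} (γ : ℝ) (R : Matrix (Fin m) (Fin m) ℝ) (c : Fin m → ℝ) :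
    Continuous fun w : Fin m → ℝ => Real.exp ((2 * (c ⬝ᵥ w) - w ⬝ᵥ R.mulVec w)/γ) := by
  simp only [dotProduct, Matrix.mulVec]; fun_prop

open scoped MatrixOrder in
/-- The key multivariate Gaussian integral. -/
lemma gaussR {m : ℕ} (γ : ℝ) (hγ : 0 < γ) (R : Matrix (Fin m) (Fin m) ℝ) (hR : R.PosDef)
    (c : Fin m → ℝ) :
    ∫ u : Fin m → ℝ, Real.exp ((2 * (c ⬝ᵥ u) - u ⬝ᵥ R.mulVec u)/γ)
      = Real.sqrt ((Real.pi * γ) ^ m / R.det) * Real.exp ((c ⬝ᵥ R⁻¹.mulVec c)/γ) := by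
  have hRsymm : Rᵀ = R := hR.isHermitian
  have hRdet : IsUnit R.det := isUnit_iff_ne_zero.2 hR.det_pos.ne'
  set b : Fin m → ℝ := R⁻¹.mulVec c with hb
  have hRb : R.mulVec b = c := by
    rw [hb, Matrix.mulVec_mulVec, Matrix.mul_nonsing_inv R hRdet, Matrix.one_mulVec]
  have htrans : ∫ u : Fin m → ℝ, Real.exp ((2 * (c ⬝ᵥ u) - u ⬝ᵥ R.mulVec u)/γ)
      = Real.exp ((c ⬝ᵥ b)/γ) * ∫ w : Fin m → ℝ, Real.exp (-(w ⬝ᵥ R.mulVec w)/γ) := by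
    rw [← MeasureTheory.integral_add_right_eq_self
      (fun u : Fin m → ℝ => Real.exp ((2 * (c ⬝ᵥ u) - u ⬝ᵥ R.mulVec u)/γ)) b]
    rw [← MeasureTheory.integral_const_mul]
    congr 1
    funext w
    rw [← Real.exp_add]
    congr 1
    have h1 : (w + b) ⬝ᵥ R.mulVec (w + b)
        = w ⬝ᵥ R.mulVec w + w ⬝ᵥ c + c ⬝ᵥ w + c ⬝ᵥ b := by
      rw [Matrix.mulVec_add, dotProduct_add, add_dotProduct,
        add_dotProduct, hRb]
      have h2 : b ⬝ᵥ R.mulVec w = c ⬝ᵥ w := by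
        rw [Matrix.dotProduct_mulVec, ← Matrix.mulVec_transpose, hRsymm, hRb]
      have h3 : b ⬝ᵥ c = c ⬝ᵥ b := dotProduct_comm b c
      rw [h2, h3]; ring
    rw [dotProduct_add, h1]
    have h4 : c ⬝ᵥ w = w ⬝ᵥ c := dotProduct_comm c w
    rw [h4]; ring
  set T := (CFC.sqrt R : Matrix (Fin m) (Fin m) ℝ) with hT
  have hTsymm : Tᵀ = T := (CFC.sqrt_nonneg R).posSemidef.isHermitian
  have hTT : T * T = R := CFC.sqrt_mul_sqrt_self R hR.posSemidef.nonneg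
  have hTdet_sq : T.det ^ 2 = R.det := by rw [sq, ← Matrix.det_mul, hTT]
  have hTdet_nonneg : 0 ≤ T.det := psd_det_nonneg_s9 T (CFC.sqrt_nonneg R).posSemidef
  have hTdet : T.det = Real.sqrt R.det := by
    rw [← hTdet_sq, Real.sqrt_sq hTdet_nonneg]
  have hTdet_pos : 0 < T.det := by rw [hTdet]; exact Real.sqrt_pos.2 hR.det_pos
  have hTunit : IsUnit T.det := isUnit_iff_ne_zero.2 hTdet_pos.ne'
  have hTinv_det_eq : (T⁻¹).det = T.det⁻¹ := by
    rw [Matrix.det_nonsing_inv, Ring.inverse_eq_inv]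
  have hTinv_det : (T⁻¹).det ≠ 0 := by
    rw [hTinv_det_eq]; exact inv_ne_zero hTdet_pos.ne'
  have hsub : ∀ v : Fin m → ℝ, (T⁻¹.mulVec v) ⬝ᵥ R.mulVec (T⁻¹.mulVec v) = v ⬝ᵥ v := by
    intro v
    rw [Matrix.mulVec_mulVec, dot_mulVec_left, Matrix.mulVec_mulVec,
      Matrix.transpose_nonsing_inv, hTsymm, ← Matrix.mul_assoc, ← hTT,
      ← Matrix.mul_assoc, Matrix.nonsing_inv_mul T hTunit, Matrix.one_mul,
      Matrix.mul_nonsing_inv T hTunit, Matrix.one_mulVec]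
  have hcont : Continuous fun w : Fin m → ℝ => Real.exp (-(w ⬝ᵥ R.mulVec w)/γ) := by
    have := cont_quad γ R (0 : Fin m → ℝ)
    simpa using this
  have hJ : ∫ w : Fin m → ℝ, Real.exp (-(w ⬝ᵥ R.mulVec w)/γ)
      = Real.sqrt ((Real.pi * γ) ^ m / R.det) := by
    have hcov := cov T⁻¹ hTinv_det _ hcont
    have : ∀ v : Fin m → ℝ, Real.exp (-(T⁻¹.mulVec v ⬝ᵥ R.mulVec (T⁻¹.mulVec v))/γ)
        = Real.exp (-(v ⬝ᵥ v)/γ) := fun v => by rw [hsub v]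
    rw [funext this, gaussm m γ hγ] at hcov
    rw [hTinv_det_eq, abs_inv, inv_inv, abs_of_pos hTdet_pos] at hcov
    have hval : ∫ w : Fin m → ℝ, Real.exp (-(w ⬝ᵥ R.mulVec w)/γ)
        = Real.sqrt (Real.pi * γ) ^ m / T.det := by
      field_simp at hcov ⊢
      linarith [hcov]
    rw [hval, hTdet, Real.sqrt_div (by positivity : (0:ℝ) ≤ (Real.pi*γ)^m),
      sqrt_pow' _ _ (by positivity : (0:ℝ) ≤ Real.pi*γ)]
  rw [htrans, hJ, mul_comm]

noncomputable def dotCLM {d : ℕ} (w : Fin d → ℝ) : (Fin d → ℝ) →L[ℝ] ℝ :=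
  ∑ i, w i • (ContinuousLinearMap.proj i : (Fin d → ℝ) →L[ℝ] ℝ)

lemma dotCLM_apply {d : ℕ} (w v : Fin d → ℝ) : dotCLM w v = w ⬝ᵥ v := by
  simp [dotCLM, dotProduct]

lemma hasFDerivAt_quad {d : ℕ} (H : Matrix (Fin d) (Fin d) ℝ) (x : Fin d → ℝ) :
    HasFDerivAt (fun y : Fin d → ℝ => y ⬝ᵥ H.mulVec y)
      (dotCLM ((H + Hᵀ).mulVec x)) x := by
  have heq : (fun y : Fin d → ℝ => y ⬝ᵥ H.mulVec y)
      = fun y => ∑ p : Fin d × Fin d, H p.1 p.2 * (y p.1 * y p.2) := by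
    funext y
    rw [Fintype.sum_prod_type]
    simp only [dotProduct, Matrix.mulVec, Finset.mul_sum]
    congr 1; funext i; congr 1; funext j; ring
  rw [heq]
  have hterm : ∀ p : Fin d × Fin d, HasFDerivAt (fun y : Fin d → ℝ => H p.1 p.2 * (y p.1 * y p.2))
      (H p.1 p.2 • (x p.1 • (ContinuousLinearMap.proj p.2 : (Fin d → ℝ) →L[ℝ] ℝ)
        + x p.2 • (ContinuousLinearMap.proj p.1 : (Fin d → ℝ) →L[ℝ] ℝ))) x := by
    intro p
    exact (((ContinuousLinearMap.proj p.1 : (Fin d → ℝ) →L[ℝ] ℝ).hasFDerivAt.mul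
      (ContinuousLinearMap.proj p.2 : (Fin d → ℝ) →L[ℝ] ℝ).hasFDerivAt)).const_mul _
  have hsum := HasFDerivAt.sum (fun p _ => hterm p) (u := (Finset.univ : Finset (Fin d × Fin d)))
  rw [show (fun y : Fin d → ℝ => ∑ p : Fin d × Fin d, H p.1 p.2 * (y p.1 * y p.2))
      = ∑ p : Fin d × Fin d, fun y : Fin d → ℝ => H p.1 p.2 * (y p.1 * y p.2) from by
    ext y; simp]
  refine hsum.congr_fderiv ?_
  symm
  ext v
  simp only [dotCLM, ContinuousLinearMap.sum_apply, ContinuousLinearMap.smul_apply,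
    ContinuousLinearMap.add_apply, ContinuousLinearMap.proj_apply, smul_eq_mul,
    Matrix.mulVec, dotProduct, Matrix.add_apply, Matrix.transpose_apply]
  rw [Fintype.sum_prod_type]
  simp only [Finset.sum_mul, Finset.mul_sum, add_mul, mul_add]
  simp only [Finset.sum_add_distrib]
  rw [add_comm]
  congr 1
  · conv_lhs => rw [Finset.sum_comm]
    congr 1; funext i; congr 1; funext j; ring
  · congr 1; funext i; congr 1; funext j; ring

lemma gradV {d : ℕ} (H : Matrix (Fin d) (Fin d) ℝ) (g : ℝ) (x : Fin d → ℝ) :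
    gradientVec (fun y => y ⬝ᵥ H.mulVec y + g) x = (H + Hᵀ).mulVec x := by
  funext i
  unfold gradientVec
  rw [((hasFDerivAt_quad H x).add_const g).fderiv, dotCLM_apply]
  simp [dotProduct, Pi.single_apply]

lemma hessV {d : ℕ} (H : Matrix (Fin d) (Fin d) ℝ) (g : ℝ) (x : Fin d → ℝ) :
    hessianMat (fun y => y ⬝ᵥ H.mulVec y + g) x = H + Hᵀ := by
  funext i j
  unfold hessianMat
  have h1 : (fun y : Fin d → ℝ => fderiv ℝ (fun z => z ⬝ᵥ H.mulVec z + g) y (Pi.single i 1))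
      = fun y => dotCLM ((H + Hᵀ) i) y := by
    funext y
    rw [((hasFDerivAt_quad H y).add_const g).fderiv, dotCLM_apply, dotCLM_apply]
    simp [dotProduct, Matrix.mulVec, Pi.single_apply]
  rw [h1, (dotCLM ((H + Hᵀ) i)).hasFDerivAt.fderiv, dotCLM_apply]
  simp [dotProduct, Pi.single_apply]

lemma jumpV {d : ℕ} (H : Matrix (Fin d) (Fin d) ℝ) (g : ℝ) (x : Fin d → ℝ) (a : ℝ) (i : Fin d) :
    (fun y => y ⬝ᵥ H.mulVec y + g) (x + a • (Pi.single i 1 : Fin d → ℝ))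
      - (fun y => y ⬝ᵥ H.mulVec y + g) x - a * ((H + Hᵀ).mulVec x) i
      = a ^ 2 * H i i := by
  simp only
  simp only [Matrix.add_mulVec, Pi.add_apply, Matrix.mulVec_add, Matrix.mulVec_smul,
    dotProduct_add, add_dotProduct, smul_dotProduct,
    dotProduct_smul, smul_eq_mul]
  have e1 : (Pi.single i 1 : Fin d → ℝ) ⬝ᵥ H.mulVec x = (H.mulVec x) i := by
    simp [dotProduct, Pi.single_apply]
  have e2 : x ⬝ᵥ H.mulVec (Pi.single i 1) = (Hᵀ.mulVec x) i := by
    simp [dotProduct, Matrix.mulVec, Pi.single_apply, Finset.mul_sum, mul_comm]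
  have e3 : (Pi.single i 1 : Fin d → ℝ) ⬝ᵥ H.mulVec (Pi.single i 1) = H i i := by
    simp [dotProduct, Matrix.mulVec, Pi.single_apply]
  rw [e1, e2, e3]
  ring

end Aux

/-- Stationary form of the entropy-regularized HJB equation for the time-homogeneous
LQ jump-diffusion problem: if the symmetric matrix `H` solves the algebraic Riccati
equation `0 = βH + Q − HBR⁻¹BᵀH` and `g` is given explicitly, then
`V(x) = xᵀHx + g` satisfies `βV(x) = γ log ∫_{ℝ^m} exp((𝓛^uV(x) + f(x,u))/γ) du`. -/
theorem lq_homogeneous_entropy_hjb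
    (d m : ℕ)
    (B : Matrix (Fin d) (Fin m) ℝ) (S : Matrix (Fin d) (Fin d) ℝ)
    (α lam : Fin d → ℝ) (hlam : ∀ i, 0 ≤ lam i)
    (R : Matrix (Fin m) (Fin m) ℝ) (hR : R.PosDef)
    (Q : Matrix (Fin d) (Fin d) ℝ) (hQ : Q.IsSymm)
    (β γ : ℝ) (hβ : 0 < β) (hγ : 0 < γ)
    (H : Matrix (Fin d) (Fin d) ℝ) (hHsymm : H.IsSymm)
    (hH : 0 = β • H + Q - H * B * R⁻¹ * Bᵀ * H)
    (g : ℝ)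
    (hg : g = β⁻¹ * (Matrix.trace (S * Sᵀ * H) + (∑ i, lam i * α i ^ 2 * H i i)
        + (γ / 2) * (m * Real.log (Real.pi * γ) - Real.log R.det)))
    (V : (Fin d → ℝ) → ℝ) (hV : V = fun x => x ⬝ᵥ H.mulVec x + g) :
    ∀ x : Fin d → ℝ,
      β * V x = γ * Real.log (∫ u : Fin m → ℝ,
          Real.exp ((lqGen B S α lam u V x
              - (u ⬝ᵥ R.mulVec u + x ⬝ᵥ Q.mulVec x)) / γ)) := by
  intro x
  have hHt : Hᵀ = H := hHsymm
  subst hV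
  set c : Fin m → ℝ := Bᵀ.mulVec (H.mulVec x) with hc
  set K : ℝ := Matrix.trace (S * Sᵀ * H) + (∑ i, lam i * α i ^ 2 * H i i)
      - x ⬝ᵥ Q.mulVec x with hK
  -- evaluate the generator
  have hgen : ∀ u : Fin m → ℝ,
      lqGen B S α lam u (fun y => y ⬝ᵥ H.mulVec y + g) x
        = 2 * (c ⬝ᵥ u) + Matrix.trace (S * Sᵀ * H) + ∑ i, lam i * α i ^ 2 * H i i := by
    intro u
    unfold lqGen
    rw [gradV, hessV]
    have hjump : ∀ i, lam i *
        ((fun y => y ⬝ᵥ H.mulVec y + g) (x + α i • (Pi.single i 1 : Fin d → ℝ))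
          - (fun y => y ⬝ᵥ H.mulVec y + g) x - α i * ((H + Hᵀ).mulVec x) i)
        = lam i * α i ^ 2 * H i i := by
      intro i
      rw [jumpV H g x (α i) i, mul_assoc]
    rw [Finset.sum_congr rfl (fun i _ => hjump i)]
    have hdot : B.mulVec u ⬝ᵥ (H + Hᵀ).mulVec x = 2 * (c ⬝ᵥ u) := by
      rw [hHt, Matrix.add_mulVec, dotProduct_add, dot_mulVec_left, hc,
        dotProduct_comm]
      ring
    have htr : (1 / 2 : ℝ) * Matrix.trace (S * Sᵀ * (H + Hᵀ)) = Matrix.trace (S * Sᵀ * H) := by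
      rw [hHt, Matrix.mul_add, Matrix.trace_add]
      ring
    rw [hdot, htr]
  -- rewrite the integrand
  have hpt : (fun u : Fin m → ℝ =>
      Real.exp ((lqGen B S α lam u (fun y => y ⬝ᵥ H.mulVec y + g) x
        - (u ⬝ᵥ R.mulVec u + x ⬝ᵥ Q.mulVec x)) / γ))
      = fun u => Real.exp (K / γ) * Real.exp ((2 * (c ⬝ᵥ u) - u ⬝ᵥ R.mulVec u) / γ) := by
    funext u
    rw [← Real.exp_add, ← add_div]
    congr 2
    rw [hgen u, hK]
    ring
  rw [hpt, MeasureTheory.integral_const_mul, gaussR γ hγ R hR c]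
  -- compute the quadratic term via the Riccati equation
  have hquad : c ⬝ᵥ R⁻¹.mulVec c = β * (x ⬝ᵥ H.mulVec x) + x ⬝ᵥ Q.mulVec x := by
    have hM : H * B * R⁻¹ * Bᵀ * H = β • H + Q :=
      (sub_eq_zero.mp hH.symm).symm
    have h1 : c ⬝ᵥ R⁻¹.mulVec c = x ⬝ᵥ (H * B * R⁻¹ * Bᵀ * H).mulVec x := by
      rw [hc, Matrix.mulVec_mulVec, dot_mulVec_left, Matrix.mulVec_mulVec,
        Matrix.transpose_mul, Matrix.transpose_transpose, hHt]
      rw [Matrix.mulVec_mulVec]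
      simp only [Matrix.mul_assoc]
    rw [h1, hM, Matrix.add_mulVec, dotProduct_add, Matrix.smul_mulVec,
      dotProduct_smul, smul_eq_mul]
  -- positivity facts
  have hDpos : 0 < (Real.pi * γ) ^ m / R.det :=
    div_pos (pow_pos (by positivity) m) hR.det_pos
  -- take the logarithm
  rw [Real.log_mul (Real.exp_ne_zero _)
      (by positivity : Real.sqrt ((Real.pi * γ) ^ m / R.det) * Real.exp ((c ⬝ᵥ R⁻¹.mulVec c)/γ) ≠ 0),
    Real.log_mul (by positivity) (Real.exp_ne_zero _),
    Real.log_exp, Real.log_exp, Real.log_sqrt hDpos.le,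
    Real.log_div (by positivity) hR.det_pos.ne', Real.log_pow, hquad]
  have hbg : β * g = Matrix.trace (S * Sᵀ * H) + (∑ i, lam i * α i ^ 2 * H i i)
      + (γ / 2) * (m * Real.log (Real.pi * γ) - Real.log R.det) := by
    rw [hg, ← mul_assoc, mul_inv_cancel₀ hβ.ne', one_mul]
  simp only [hK]
  rw [mul_add, mul_add, hbg]
  field_simp
  ring
end

section
/- Let 0 < p < 1, σ > 0, λ ≥ 0, α ∈ ℝ, μ, r ∈ ℝ, and β > 0. On D := {u ∈ ℝ : 1 + αu > 0}, define G(u) := p(r + (μ − r)u) + (1/2)p(p − 1)σ²u² + λ((1 + αu)^p − 1 − pαu). Suppose u* ∈ D satisfies G'(u*) = 0 and β > G(u*), and set h* := 1/(β − G(u*)) and V(x) := (h*/p) x^p for x > 0. Then for every x > 0, β V(x) = sup_{u ∈ D} { (r + (μ − r)u) x V'(x) + (1/2)σ²u²x² V''(x) + λ( V(x(1 + αu)) − V(x) − αux V'(x) ) + x^p/p }, and the supremum is attained uniquely at u = u*. -/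
set_option maxHeartbeats 1000000

open Real Set

/-- Verification of the closed-form solution of the standard (γ = 0) infinite-horizon
discounted Merton problem in a jump-diffusion market: with `G` the Merton exponent
function, `u* ∈ D` a critical point of `G`, `β > G(u*)`, `h* = 1/(β − G(u*))` and
`V(x) = (h*/p)x^p`, the stationary HJB equation
`βV(x) = sup_{u ∈ D} {(r+(μ−r)u)xV' + ½σ²u²x²V'' + λ(V(x(1+αu)) − V(x) − αuxV') + x^p/p}`
holds for every `x > 0`, the supremum being attained uniquely at `u*`. -/
theorem merton_hjb_verification
    (p σ lam α μ r β : ℝ)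
    (hp : 0 < p) (hp1 : p < 1) (hσ : 0 < σ) (hlam : 0 ≤ lam) (hβ : 0 < β)
    (D : Set ℝ) (hD : D = {u : ℝ | 0 < 1 + α * u})
    (G : ℝ → ℝ)
    (hG : G = fun u => p * (r + (μ - r) * u) + (1 / 2) * p * (p - 1) * σ ^ 2 * u ^ 2
        + lam * ((1 + α * u) ^ p - 1 - p * α * u))
    (ustar : ℝ) (hustar : ustar ∈ D) (hcrit : deriv G ustar = 0)
    (hβG : G ustar < β)
    (hstar : ℝ) (hhstar : hstar = 1 / (β - G ustar))
    (V : ℝ → ℝ) (hV : V = fun x => (hstar / p) * x ^ p) :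
    ∀ x : ℝ, 0 < x →
      let ham : ℝ → ℝ := fun u =>
        (r + (μ - r) * u) * x * deriv V x
          + (1 / 2) * σ ^ 2 * u ^ 2 * x ^ 2 * deriv (deriv V) x
          + lam * (V (x * (1 + α * u)) - V x - α * u * x * deriv V x)
          + x ^ p / p
      (β * V x = ham ustar) ∧
      (∀ u ∈ D, u ≠ ustar → ham u < ham ustar) := by
  -- basic facts about D
  have hmem : ∀ u : ℝ, u ∈ D ↔ 0 < 1 + α * u := by intro u; rw [hD]; exact Iff.rfl
  have hustar' : 0 < 1 + α * ustar := (hmem ustar).mp hustar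
  have hconv : Convex ℝ D := by
    intro a ha b hb s t hs ht hst
    rw [hmem] at ha hb ⊢
    simp only [smul_eq_mul]
    have key : 0 < s * (1 + α * a) + t * (1 + α * b) := by
      rcases hs.lt_or_eq with h | h
      · exact add_pos_of_pos_of_nonneg (mul_pos h ha) (mul_nonneg ht hb.le)
      · have ht1 : t = 1 := by linarith
        rw [← h, ht1]; simpa using hb
    nlinarith [key, hst]
  -- the derivative g of G and the second derivative
  set g : ℝ → ℝ := fun u => p * (μ - r) + p * (p - 1) * σ ^ 2 * u
      + lam * (p * (1 + α * u) ^ (p - 1) * α - p * α) with hg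
  have hGderiv : ∀ u ∈ D, HasDerivAt G (g u) u := by
    intro u hu
    have hu' : 0 < 1 + α * u := (hmem u).mp hu
    rw [hG, hg]
    have h1 : HasDerivAt (fun u : ℝ => 1 + α * u) α u := by
      simpa using ((hasDerivAt_id u).const_mul α).const_add 1
    have h2 : HasDerivAt (fun y : ℝ => y ^ p) (p * (1 + α * u) ^ (p - 1)) (1 + α * u) :=
      Real.hasDerivAt_rpow_const (Or.inl hu'.ne')
    have h3 : HasDerivAt (fun u : ℝ => (1 + α * u) ^ p) (p * (1 + α * u) ^ (p - 1) * α) u := by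
      exact h2.comp u h1
    have h4 : HasDerivAt (fun u : ℝ => p * (r + (μ - r) * u)) (p * (μ - r)) u := by
      simpa using (((hasDerivAt_id u).const_mul (μ - r)).const_add r).const_mul p
    have h5 : HasDerivAt (fun u : ℝ => (1 / 2) * p * (p - 1) * σ ^ 2 * u ^ 2)
        ((1 / 2) * p * (p - 1) * σ ^ 2 * (2 * u)) u := by
      simpa using (hasDerivAt_pow 2 u).const_mul ((1 / 2) * p * (p - 1) * σ ^ 2)
    have h6 : HasDerivAt (fun u : ℝ => lam * ((1 + α * u) ^ p - 1 - p * α * u))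
        (lam * (p * (1 + α * u) ^ (p - 1) * α - p * α)) u := by
      have := ((h3.sub_const 1).sub ((hasDerivAt_id u).const_mul (p * α))).const_mul lam
      refine this.congr_deriv ?_
      ring
    refine ((h4.add h5).add h6).congr_deriv ?_
    ring
  have hgcrit : g ustar = 0 := by
    rw [← (hGderiv ustar hustar).deriv]; exact hcrit
  have hgderiv : ∀ u ∈ D, HasDerivAt g
      (p * (p - 1) * σ ^ 2 + lam * (p * ((p - 1) * (1 + α * u) ^ (p - 2)) * α * α)) u := by
    intro u hu
    have hu' : 0 < 1 + α * u := (hmem u).mp hu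
    rw [hg]
    have h1 : HasDerivAt (fun u : ℝ => 1 + α * u) α u := by
      simpa using ((hasDerivAt_id u).const_mul α).const_add 1
    have h2 : HasDerivAt (fun y : ℝ => y ^ (p - 1)) ((p - 1) * (1 + α * u) ^ (p - 1 - 1))
        (1 + α * u) := Real.hasDerivAt_rpow_const (Or.inl hu'.ne')
    have h3 : HasDerivAt (fun u : ℝ => (1 + α * u) ^ (p - 1))
        ((p - 1) * (1 + α * u) ^ (p - 2) * α) u := by
      have := h2.comp u h1
      rw [show p - 1 - 1 = p - 2 by ring] at this
      exact this
    have h4 : HasDerivAt (fun u : ℝ => p * (μ - r) + p * (p - 1) * σ ^ 2 * u)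
        (p * (p - 1) * σ ^ 2) u := by
      simpa using (((hasDerivAt_id u).const_mul (p * (p - 1) * σ ^ 2)).const_add (p * (μ - r)))
    have h5 : HasDerivAt (fun u : ℝ => lam * (p * (1 + α * u) ^ (p - 1) * α - p * α))
        (lam * (p * ((p - 1) * (1 + α * u) ^ (p - 2)) * α * α)) u := by
      have := (((h3.const_mul p).mul_const α).sub_const (p * α)).const_mul lam
      refine this.congr_deriv ?_
      ring
    exact h4.add h5
  have hopen : IsOpen D := by
    rw [hD]
    exact isOpen_lt continuous_const (by continuity)
  have hgcont : ContinuousOn g D := fun u hu => ((hgderiv u hu).continuousAt).continuousWithinAt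
  have hganti : StrictAntiOn g D := by
    refine strictAntiOn_of_deriv_neg hconv hgcont ?_
    intro u hu
    rw [hopen.interior_eq] at hu
    rw [(hgderiv u hu).deriv]
    have hu' : 0 < 1 + α * u := (hmem u).mp hu
    have hr : 0 < (1 + α * u) ^ (p - 2) := Real.rpow_pos_of_pos hu' _
    have t1 : p * (p - 1) * σ ^ 2 < 0 := by
      nlinarith [mul_pos (mul_pos hp (pow_pos hσ 2)) (sub_pos.mpr hp1)]
    have t2 : lam * (p * ((p - 1) * (1 + α * u) ^ (p - 2)) * α * α) ≤ 0 := by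
      have h0 : p * ((p - 1) * (1 + α * u) ^ (p - 2)) * α * α ≤ 0 := by
        nlinarith [mul_nonneg (mul_pos (mul_pos hp (sub_pos.mpr hp1)) hr).le (sq_nonneg α)]
      exact mul_nonpos_of_nonneg_of_nonpos hlam h0
    linarith
  -- G attains its strict maximum on D at ustar
  have hGmax : ∀ u ∈ D, u ≠ ustar → G u < G ustar := by
    intro u hu hne
    rcases lt_or_gt_of_ne hne with h | h
    · have hsub : Icc u ustar ⊆ D := hconv.ordConnected.out hu hustar
      have hmono : StrictMonoOn G (Icc u ustar) := by
        refine strictMonoOn_of_deriv_pos (convex_Icc _ _)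
          (fun t ht => ((hGderiv t (hsub ht)).continuousAt).continuousWithinAt) ?_
        intro t ht
        rw [interior_Icc] at ht
        have htD : t ∈ D := hsub (Ioo_subset_Icc_self ht)
        rw [(hGderiv t htD).deriv]
        have := hganti htD hustar ht.2
        rw [hgcrit] at this
        exact this
      exact hmono (left_mem_Icc.mpr h.le) (right_mem_Icc.mpr h.le) h
    · have hsub : Icc ustar u ⊆ D := hconv.ordConnected.out hustar hu
      have hanti : StrictAntiOn G (Icc ustar u) := by
        refine strictAntiOn_of_deriv_neg (convex_Icc _ _)
          (fun t ht => ((hGderiv t (hsub ht)).continuousAt).continuousWithinAt) ?_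
        intro t ht
        rw [interior_Icc] at ht
        have htD : t ∈ D := hsub (Ioo_subset_Icc_self ht)
        rw [(hGderiv t htD).deriv]
        have := hganti hustar htD ht.1
        rw [hgcrit] at this
        exact this
      exact hanti (left_mem_Icc.mpr h.le) (right_mem_Icc.mpr h.le) h
  -- now the main computation
  intro x hx
  have hV1 : ∀ y : ℝ, 0 < y → HasDerivAt V (hstar * y ^ (p - 1)) y := by
    intro y hy
    rw [hV]
    have h := (Real.hasDerivAt_rpow_const (p := p) (Or.inl hy.ne')).const_mul (hstar / p)
    refine h.congr_deriv ?_
    field_simp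
  have hdVx : deriv V x = hstar * x ^ (p - 1) := (hV1 x hx).deriv
  have hev : deriv V =ᶠ[nhds x] fun y => hstar * y ^ (p - 1) := by
    filter_upwards [Ioi_mem_nhds hx] with y hy
    exact (hV1 y hy).deriv
  have hd2 : deriv (deriv V) x = hstar * ((p - 1) * x ^ (p - 1 - 1)) := by
    rw [hev.deriv_eq]
    exact ((Real.hasDerivAt_rpow_const (p := p - 1) (Or.inl hx.ne')).const_mul hstar).deriv
  have key : ∀ u : ℝ, 0 < 1 + α * u →
      (r + (μ - r) * u) * x * deriv V x
        + (1 / 2) * σ ^ 2 * u ^ 2 * x ^ 2 * deriv (deriv V) x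
        + lam * (V (x * (1 + α * u)) - V x - α * u * x * deriv V x)
        + x ^ p / p
      = x ^ p / p * (hstar * G u + 1) := by
    intro u hu
    have e1 : x ^ (p - 1) = x ^ p / x := by
      rw [Real.rpow_sub hx, Real.rpow_one]
    have e2 : x ^ (p - 1 - 1) = x ^ p / x ^ 2 := by
      rw [show p - 1 - 1 = p - 2 by ring, Real.rpow_sub hx,
        show (2 : ℝ) = ((2 : ℕ) : ℝ) by norm_num, Real.rpow_natCast]
    have e3 : (x * (1 + α * u)) ^ p = x ^ p * (1 + α * u) ^ p :=
      Real.mul_rpow hx.le hu.le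
    rw [hdVx, hd2, hG, e1, e2]
    simp only [hV]
    rw [e3]
    have hx0 : x ≠ 0 := hx.ne'
    have hp0 : p ≠ 0 := hp.ne'
    field_simp
  have hβG' : (0 : ℝ) < β - G ustar := by linarith
  have hhpos : 0 < hstar := by rw [hhstar]; positivity
  have hxp : 0 < x ^ p / p := div_pos (Real.rpow_pos_of_pos hx p) hp
  refine ⟨?_, ?_⟩
  · show β * V x
        = (r + (μ - r) * ustar) * x * deriv V x
          + (1 / 2) * σ ^ 2 * ustar ^ 2 * x ^ 2 * deriv (deriv V) x
          + lam * (V (x * (1 + α * ustar)) - V x - α * ustar * x * deriv V x)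
          + x ^ p / p
    rw [key ustar hustar', hV]
    have hone : hstar * (β - G ustar) = 1 := by
      rw [hhstar]; field_simp
    linear_combination (x ^ p / p) * hone
  · intro u hu hne
    show (r + (μ - r) * u) * x * deriv V x
          + (1 / 2) * σ ^ 2 * u ^ 2 * x ^ 2 * deriv (deriv V) x
          + lam * (V (x * (1 + α * u)) - V x - α * u * x * deriv V x)
          + x ^ p / p
        < (r + (μ - r) * ustar) * x * deriv V x
          + (1 / 2) * σ ^ 2 * ustar ^ 2 * x ^ 2 * deriv (deriv V) x
          + lam * (V (x * (1 + α * ustar)) - V x - α * ustar * x * deriv V x)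
          + x ^ p / p
    rw [key u ((hmem u).mp hu), key ustar hustar']
    have hlt := hGmax u hu hne
    nlinarith [mul_pos (mul_pos hxp hhpos) (sub_pos.mpr hlt)]
end
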